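/- Let M be a real symmetric n×n positive definite matrix with M[i,i] = 1 for all i, and such that each off-diagonal entry M[i,j] (i ≠ j) is either 0 or at most −1/2. Then the number of unordered pairs {i,j} with i ≠ j and M[i,j] ≠ 0 is at most n − 1. -/

import Mathlib

open Finset

theorem card_edges_le_of_posDef_gram {n : ℕ} (M : Matrix (Fin n) (Fin n) ℝ)
    (hM : M.PosDef) (hdiag : ∀ i, M i i = 1)
    (hoff : ∀ i j, i ≠ j → M i j = 0 ∨ M i j ≤ -(1 / 2)) :
    {s : Finset (Fin n) | s.card = 2 ∧ ∀ i ∈ s, ∀ j ∈ s, i ≠ j → M i j ≠ 0}.ncard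
      ≤ n - 1 := by
  have hsym : ∀ i j, M j i = M i j := fun i j => by
    have := hM.1; rw [Matrix.IsHermitian] at this
    conv_lhs => rw [← this]
    simp [Matrix.conjTranspose_apply]
  classical
  set F : Finset (Finset (Fin n)) :=
    univ.filter (fun s => s.card = 2 ∧ ∀ i ∈ s, ∀ j ∈ s, i ≠ j → M i j ≠ 0) with hF
  have hset : {s : Finset (Fin n) | s.card = 2 ∧ ∀ i ∈ s, ∀ j ∈ s, i ≠ j → M i j ≠ 0}.ncard
      = F.card := by
    rw [← Set.ncard_coe_finset]
    congr 1
    ext s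
    simp [hF]
  rw [hset]
  rcases Nat.eq_zero_or_pos n with hn | hn
  · subst hn
    have : F = ∅ := by
      ext s
      simp only [hF, mem_filter, mem_univ, true_and, Finset.notMem_empty, iff_false]
      rintro ⟨h2, -⟩
      have : s ⊆ ∅ := fun x _ => (Fin.elim0 x)
      simp [Finset.subset_empty.mp this] at h2
    simp [this]
  -- the set of ordered nonzero off-diagonal pairs
  set P : Finset (Fin n × Fin n) := univ.offDiag.filter (fun p => M p.1 p.2 ≠ 0) with hP
  -- P.card = 2 * F.card
  have hfib : ∀ p ∈ P, ({p.1, p.2} : Finset (Fin n)) ∈ F := by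
    rintro ⟨a, b⟩ hp
    simp only [hP, mem_filter, mem_offDiag] at hp
    obtain ⟨⟨-, -, hab⟩, hMab⟩ := hp
    simp only [hF, mem_filter, mem_univ, true_and]
    refine ⟨card_pair hab, ?_⟩
    intro i hi j hj hij
    simp only [mem_insert, mem_singleton] at hi hj
    rcases hi with rfl | rfl <;> rcases hj with rfl | rfl <;>
      first | exact absurd rfl hij | exact hMab | (rw [hsym]; exact hMab)
  have hcard : P.card = 2 * F.card := by
    rw [card_eq_sum_card_fiberwise hfib]
    rw [Finset.sum_congr rfl (g := fun _ => 2), Finset.sum_const, smul_eq_mul, mul_comm]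
    intro s hs
    simp only [hF, mem_filter, mem_univ, true_and] at hs
    obtain ⟨h2, hMs⟩ := hs
    obtain ⟨a, b, hab, rfl⟩ := Finset.card_eq_two.mp h2
    have : P.filter (fun p => ({p.1, p.2} : Finset (Fin n)) = {a, b}) = {(a, b), (b, a)} := by
      ext ⟨x, y⟩
      simp only [mem_filter, hP, mem_offDiag, mem_univ, true_and, mem_insert, mem_singleton,
        Prod.mk.injEq]
      constructor
      · rintro ⟨⟨hxy, -⟩, hpair⟩
        have hx : x ∈ ({a, b} : Finset (Fin n)) := hpair ▸ (by simp)
        have hy : y ∈ ({a, b} : Finset (Fin n)) := hpair ▸ (by simp)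
        simp only [mem_insert, mem_singleton] at hx hy
        rcases hx with rfl | rfl <;> rcases hy with rfl | rfl <;> tauto
      · rintro (⟨rfl, rfl⟩ | ⟨rfl, rfl⟩)
        · exact ⟨⟨hab, hMs _ (by simp) _ (by simp) hab⟩, rfl⟩
        · exact ⟨⟨hab.symm, hMs _ (by simp) _ (by simp) hab.symm⟩, Finset.pair_comm _ _⟩
    rw [this]
    rw [card_insert_of_notMem (by simp [Prod.ext_iff, hab]), card_singleton]
  -- quadratic form at all-ones vector
  set v : Fin n → ℝ := fun _ => 1 with hv
  have hvne : v ≠ 0 := by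
    intro h
    have := congrFun h ⟨0, hn⟩
    simp [hv] at this
  have hpos := hM.dotProduct_mulVec_pos hvne
  have hq : dotProduct (star v) (M.mulVec v) = ∑ p ∈ univ ×ˢ univ, M p.1 p.2 := by
    rw [Finset.sum_product]
    simp [dotProduct, Matrix.mulVec, hv]
  rw [hq, ← diag_union_offDiag, Finset.sum_union (disjoint_diag_offDiag _),
    Finset.sum_diag] at hpos
  have hdiagsum : ∑ i : Fin n, M i i = (n : ℝ) := by simp [hdiag]
  have hoffsum : ∑ p ∈ univ.offDiag, M p.1 p.2 ≤ -(F.card : ℝ) := by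
    have hsplit : ∑ p ∈ univ.offDiag, M p.1 p.2 = ∑ p ∈ P, M p.1 p.2 := by
      rw [← Finset.sum_filter_add_sum_filter_not univ.offDiag (fun p => M p.1 p.2 ≠ 0)]
      have : ∑ p ∈ univ.offDiag.filter (fun p => ¬ M p.1 p.2 ≠ 0), M p.1 p.2 = 0 := by
        apply Finset.sum_eq_zero
        intro p hp
        simp only [mem_filter, not_not] at hp
        exact hp.2
      rw [this, add_zero]
    rw [hsplit]
    calc ∑ p ∈ P, M p.1 p.2 ≤ ∑ p ∈ P, (-(1/2) : ℝ) := by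
          apply Finset.sum_le_sum
          rintro ⟨a, b⟩ hp
          simp only [hP, mem_filter, mem_offDiag] at hp
          rcases hoff a b hp.1.2.2 with h0 | hle
          · exact absurd h0 hp.2
          · exact hle
      _ = -(P.card : ℝ) / 2 := by rw [Finset.sum_const]; ring
      _ = -(F.card : ℝ) := by rw [hcard]; push_cast; ring
  have : (F.card : ℝ) < n := by linarith [hpos, hdiagsum]
  have : F.card < n := by exact_mod_cast this
  omega
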